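/- arXiv:1505.00810 — 2 statements merged into one kernel-verified Lean document; each statement's English description precedes it below -/
import Mathlib

section
/- For λ_u, λ_a, P̄_T, P_Tmax > 0, α > 2, and r_c = (P_Tmax/P̄_T)^{1/α}, the mean total received power 2πλ_u ∫_0^∞ min{P_Tmax r^{-α}, P̄_T} e^{-λ_a π r²} r dr equals (λ_u/λ_a)(1 - e^{-πλ_a r_c²}) P̄_T + πλ_u (πλ_a)^{α/2 - 1} P_Tmax Γ(1 - α/2, πλ_a r_c²), where Γ(s,x) = ∫_x^∞ t^{s-1} e^{-t} dt is the upper incomplete gamma function. -/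
open Real MeasureTheory

/-- Upper incomplete gamma function `Γ(s,x) = ∫_x^∞ t^{s-1} e^{-t} dt`. -/
noncomputable def upperGamma (s x : ℝ) : ℝ := ∫ t in Set.Ioi x, t ^ (s - 1) * Real.exp (-t)

/-- Mean total received power (Lemma 1). -/
theorem meanTotalReceivedPower (lu la PT PTmax α rc : ℝ)
    (hlu : 0 < lu) (hla : 0 < la) (hPT : 0 < PT) (hPTmax : 0 < PTmax)
    (hα : 2 < α) (hrc : rc = (PTmax / PT) ^ (1 / α)) :
    2 * π * lu * ∫ r in Set.Ioi (0:ℝ),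
        min (PTmax * r ^ (-α)) PT * Real.exp (-(la * π * r ^ 2)) * r =
      lu / la * (1 - Real.exp (-(π * la * rc ^ 2))) * PT +
        π * lu * (π * la) ^ (α / 2 - 1) * PTmax * upperGamma (1 - α / 2) (π * la * rc ^ 2) := by
  have hα0 : (0:ℝ) < α := by linarith
  have hπ : (0:ℝ) < π := Real.pi_pos
  have hb : (0:ℝ) < π * la := by positivity
  set b : ℝ := π * la with hbdef
  have hrc0 : 0 < rc := by rw [hrc]; positivity
  have hrcα : rc ^ α = PTmax / PT := by
    rw [hrc, ← Real.rpow_mul (by positivity), one_div, inv_mul_cancel₀ hα0.ne', Real.rpow_one]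
  -- the two pieces of the integrand
  set f : ℝ → ℝ := fun r => min (PTmax * r ^ (-α)) PT * Real.exp (-(la * π * r ^ 2)) * r with hf
  set g1 : ℝ → ℝ := fun r => PT * Real.exp (-(la * π * r ^ 2)) * r with hg1def
  set g2 : ℝ → ℝ := fun r => PTmax * r ^ (-α) * Real.exp (-(la * π * r ^ 2)) * r with hg2def
  have hg1cont : Continuous g1 :=
    (continuous_const.mul ((continuous_const.mul (continuous_pow 2)).neg.rexp)).mul continuous_id
  have hmin1 : ∀ r ∈ Set.Ioc (0:ℝ) rc, f r = g1 r := by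
    intro r hr
    have hr0 := hr.1
    have hle : r ^ α ≤ rc ^ α := Real.rpow_le_rpow hr0.le hr.2 hα0.le
    have hrpos : (0:ℝ) < r ^ α := Real.rpow_pos_of_pos hr0 α
    have : PT ≤ PTmax * r ^ (-α) := by
      rw [Real.rpow_neg hr0.le, ← div_eq_mul_inv, le_div_iff₀ hrpos]
      calc PT * r ^ α ≤ PT * (PTmax / PT) := by
            rw [← hrcα]; exact mul_le_mul_of_nonneg_left hle hPT.le
        _ = PTmax := by field_simp
    simp only [hf, hg1def, min_eq_right this]
  have hmin2 : ∀ r ∈ Set.Ioi rc, f r = g2 r := by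
    intro r hr
    have hr0 : 0 < r := hrc0.trans hr
    have hle : rc ^ α ≤ r ^ α := Real.rpow_le_rpow hrc0.le (le_of_lt hr) hα0.le
    have hrpos : (0:ℝ) < r ^ α := Real.rpow_pos_of_pos hr0 α
    have : PTmax * r ^ (-α) ≤ PT := by
      rw [Real.rpow_neg hr0.le, ← div_eq_mul_inv, div_le_iff₀ hrpos]
      calc PTmax = PT * (PTmax / PT) := by field_simp
        _ = PT * rc ^ α := by rw [hrcα]
        _ ≤ PT * r ^ α := mul_le_mul_of_nonneg_left hle hPT.le
    simp only [hf, hg2def, min_eq_left this]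
  -- integrability
  have hbase : Integrable (fun r : ℝ => r * Real.exp (-b * r ^ 2)) :=
    integrable_mul_exp_neg_mul_sq hb
  have hexp_eq : ∀ r : ℝ, Real.exp (-(la * π * r ^ 2)) = Real.exp (-b * r ^ 2) := by
    intro r; rw [hbdef]; ring_nf
  have hInt1 : IntegrableOn g1 (Set.Ioc 0 rc) := hg1cont.integrableOn_Ioc
  have hg2cont : ContinuousOn g2 (Set.Ici rc) := by
    apply ContinuousOn.mul (ContinuousOn.mul (ContinuousOn.mul continuousOn_const ?_)
      ((continuous_const.mul (continuous_pow 2)).neg.rexp.continuousOn)) continuousOn_id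
    intro r hr
    exact (Real.continuousAt_rpow_const r (-α) (Or.inl (hrc0.trans_le hr).ne')).continuousWithinAt
  have hInt2 : IntegrableOn g2 (Set.Ici rc) := by
    apply Integrable.mono' ((hbase.const_mul (PTmax * rc ^ (-α))).integrableOn)
    · exact hg2cont.aestronglyMeasurable measurableSet_Ici
    · filter_upwards [ae_restrict_mem measurableSet_Ici] with r hr
      have hr0 : 0 < r := hrc0.trans_le hr
      have h1 : r ^ (-α) ≤ rc ^ (-α) := by
        rw [Real.rpow_neg hr0.le, Real.rpow_neg hrc0.le]
        exact inv_anti₀ (Real.rpow_pos_of_pos hrc0 α)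
          (Real.rpow_le_rpow hrc0.le hr hα0.le)
      have he : (0:ℝ) < Real.exp (-(la * π * r ^ 2)) := Real.exp_pos _
      have hnn : 0 ≤ g2 r := by
        simp only [hg2def]
        positivity
      rw [Real.norm_of_nonneg hnn]
      simp only [hg2def]
      calc PTmax * r ^ (-α) * Real.exp (-(la * π * r ^ 2)) * r
          ≤ PTmax * rc ^ (-α) * Real.exp (-(la * π * r ^ 2)) * r := by
            apply mul_le_mul_of_nonneg_right _ hr0.le
            apply mul_le_mul_of_nonneg_right _ he.le
            exact mul_le_mul_of_nonneg_left h1 hPTmax.le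
        _ = PTmax * rc ^ (-α) * (r * Real.exp (-b * r ^ 2)) := by rw [hexp_eq]; ring
  have hInt2' : IntegrableOn g2 (Set.Ioi rc) := hInt2.mono_set Set.Ioi_subset_Ici_self
  have hIntf1 : IntegrableOn f (Set.Ioc 0 rc) :=
    (hInt1.congr_fun (fun r hr => (hmin1 r hr).symm) measurableSet_Ioc)
  have hIntf2 : IntegrableOn f (Set.Ioi rc) :=
    (hInt2'.congr_fun (fun r hr => (hmin2 r hr).symm) measurableSet_Ioi)
  -- split the integral
  have hsplit : ∫ r in Set.Ioi (0:ℝ), f r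
      = (∫ r in Set.Ioc (0:ℝ) rc, f r) + ∫ r in Set.Ioi rc, f r := by
    rw [← Set.Ioc_union_Ioi_eq_Ioi hrc0.le]
    exact setIntegral_union (Set.Ioc_disjoint_Ioi le_rfl) measurableSet_Ioi hIntf1 hIntf2
  -- first piece
  have key1 : ∫ r in Set.Ioc (0:ℝ) rc, f r
      = PT / (2 * b) * (1 - Real.exp (-(b * rc ^ 2))) := by
    rw [setIntegral_congr_fun measurableSet_Ioc hmin1,
      ← intervalIntegral.integral_of_le hrc0.le]
    have hderiv : ∀ r ∈ Set.uIcc (0:ℝ) rc,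
        HasDerivAt (fun r : ℝ => -(PT / (2 * b)) * Real.exp (-(la * π * r ^ 2))) (g1 r) r := by
      intro r _
      have h1 : HasDerivAt (fun r : ℝ => -(la * π * r ^ 2)) (-(la * π * (2 * r))) r := by
        simpa [Pi.neg_def] using ((hasDerivAt_pow 2 r).const_mul (la * π)).neg
      have := (h1.exp).const_mul (-(PT / (2 * b)))
      refine this.congr_deriv ?_
      simp only [hg1def, hbdef]
      field_simp
    rw [intervalIntegral.integral_eq_sub_of_hasDerivAt hderiv
      (hg1cont.intervalIntegrable _ _)]
    have h2 : la * π * rc ^ 2 = b * rc ^ 2 := by rw [hbdef]; ring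
    have h0 : la * π * (0:ℝ) ^ 2 = 0 := by ring
    rw [h2, h0]
    simp
    ring
  -- the incomplete gamma integrand
  set G : ℝ → ℝ := fun t => t ^ (1 - α / 2 - 1) * Real.exp (-t) with hGdef
  have hGcont : ContinuousOn G (Set.Ioi (0:ℝ)) := by
    apply ContinuousOn.mul _ (continuous_neg.rexp.continuousOn)
    intro t ht
    exact (Real.continuousAt_rpow_const t _ (Or.inl (Set.mem_Ioi.mp ht).ne')).continuousWithinAt
  have hc : 0 < b * rc ^ 2 := by positivity
  have hGint : IntegrableOn G (Set.Ici (b * rc ^ 2)) := by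
    have hexp1 : IntegrableOn (fun t : ℝ => Real.exp (-t)) (Set.Ici (b * rc ^ 2)) := by
      rw [integrableOn_Ici_iff_integrableOn_Ioi]
      simpa using exp_neg_integrableOn_Ioi (b * rc ^ 2) one_pos
    apply Integrable.mono' (hexp1.const_mul ((b * rc ^ 2) ^ (1 - α / 2 - 1)))
    · exact (hGcont.mono (fun t ht => hc.trans_le ht)).aestronglyMeasurable measurableSet_Ici
    · filter_upwards [ae_restrict_mem measurableSet_Ici] with t ht
      have ht0 : 0 < t := hc.trans_le ht
      have hGnn : 0 ≤ G t := by
        simp only [hGdef]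
        positivity
      rw [Real.norm_of_nonneg hGnn]
      simp only [hGdef]
      apply mul_le_mul_of_nonneg_right _ (Real.exp_pos _).le
      have hee : (1 - α / 2 - 1) = -(α / 2) := by ring
      rw [hee, Real.rpow_neg ht0.le, Real.rpow_neg hc.le]
      exact inv_anti₀ (Real.rpow_pos_of_pos hc _)
        (Real.rpow_le_rpow hc.le ht (by linarith))
  -- pointwise identity relating integrands under t = b r²
  have hpt : ∀ r : ℝ, 0 < r →
      G (b * r ^ 2) * (b * (2 * r)) = 2 * b ^ (1 - α / 2) / PTmax * g2 r := by
    intro r hr0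
    have h2 : ((r : ℝ) ^ 2 : ℝ) ^ (-(α / 2)) = r ^ (-α) := by
      rw [← Real.rpow_natCast r 2, ← Real.rpow_mul hr0.le,
        show ((2:ℕ):ℝ) * -(α / 2) = -α by push_cast; ring]
    have hee : (1 - α / 2 - 1) = -(α / 2) := by ring
    have hsplitpow : b ^ (1 - α / 2) = b * b ^ (-(α / 2)) := by
      rw [show (1 - α / 2) = 1 + -(α / 2) by ring, Real.rpow_add hb, Real.rpow_one]
    simp only [hGdef, hg2def, hee,
      Real.mul_rpow hb.le (sq_nonneg r), h2, hexp_eq, hsplitpow]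
    field_simp
  -- change of variables t = b r²
  have key2 : ∫ r in Set.Ioi rc, G (b * r ^ 2) * (b * (2 * r))
      = upperGamma (1 - α / 2) (b * rc ^ 2) := by
    have himg1 : (fun r : ℝ => b * r ^ 2) '' Set.Ioi rc ⊆ Set.Ioi (0 : ℝ) := by
      rintro t ⟨r, hr, rfl⟩
      have : 0 < r := hrc0.trans hr
      exact Set.mem_Ioi.mpr (by positivity)
    have himg2 : (fun r : ℝ => b * r ^ 2) '' Set.Ici rc ⊆ Set.Ici (b * rc ^ 2) := by
      rintro t ⟨r, hr, rfl⟩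
      exact Set.mem_Ici.mpr (by
        apply mul_le_mul_of_nonneg_left _ hb.le
        exact pow_le_pow_left₀ hrc0.le hr 2)
    have := MeasureTheory.integral_comp_mul_deriv_Ioi
      (f := fun r : ℝ => b * r ^ 2) (f' := fun r : ℝ => b * (2 * r)) (g := G) (a := rc)
      ((continuous_const.mul (continuous_pow 2)).continuousOn)
      (Filter.Tendsto.const_mul_atTop hb
        (Filter.tendsto_pow_atTop (two_ne_zero)))
      (fun x _ => by
        simpa using (((hasDerivAt_pow 2 x).const_mul b).hasDerivWithinAt))
      (hGcont.mono himg1)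
      (hGint.mono_set himg2)
      (by
        apply IntegrableOn.congr_fun ((hInt2.const_mul (2 * b ^ (1 - α / 2) / PTmax)))
        · intro r hr
          exact (hpt r (hrc0.trans_le hr)).symm
        · exact measurableSet_Ici)
    rw [upperGamma]
    simpa only [Function.comp_apply] using this
  -- second piece
  have key2' : ∫ r in Set.Ioi rc, f r
      = PTmax / (2 * b ^ (1 - α / 2)) * upperGamma (1 - α / 2) (b * rc ^ 2) := by
    have hbpow : (0:ℝ) < b ^ (1 - α / 2) := Real.rpow_pos_of_pos hb _
    have h := setIntegral_congr_fun (μ := volume) (s := Set.Ioi rc) measurableSet_Ioi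
      (f := fun r : ℝ => G (b * r ^ 2) * (b * (2 * r)))
      (g := fun r : ℝ => 2 * b ^ (1 - α / 2) / PTmax * g2 r)
      (fun r hr => hpt r (hrc0.trans hr))
    rw [h, MeasureTheory.integral_const_mul] at key2
    rw [setIntegral_congr_fun measurableSet_Ioi hmin2]
    rw [← key2]
    field_simp
  -- assemble
  have hbpow : (0:ℝ) < b ^ (1 - α / 2) := Real.rpow_pos_of_pos hb _
  rw [hsplit, key1, key2', mul_add]
  have hA : 2 * π * lu * (PT / (2 * b) * (1 - Real.exp (-(b * rc ^ 2))))
      = lu / la * (1 - Real.exp (-(b * rc ^ 2))) * PT := by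
    rw [hbdef]
    field_simp
  have hB : 2 * π * lu * (PTmax / (2 * b ^ (1 - α / 2)) * upperGamma (1 - α / 2) (b * rc ^ 2))
      = π * lu * b ^ (α / 2 - 1) * PTmax * upperGamma (1 - α / 2) (b * rc ^ 2) := by
    rw [show α / 2 - 1 = -(1 - α / 2) by ring, Real.rpow_neg hb.le]
    field_simp
  rw [hA, hB]
end

section
/- For α > 2 and s > 0, the integral ∫_1^∞ 1/(1 + s^{-1} t^{α/2}) dt equals (2s/(α-2)) · ₂F₁(1, 1 - 2/α, 2 - 2/α, -s), where ₂F₁ is the Gauss hypergeometric function. -/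
open Real MeasureTheory

/-- Gauss hypergeometric function `₂F₁(a,b,c,x)` via the Euler integral representation
(the analytic continuation valid for `c > b > 0` and `x < 1`). -/
noncomputable def hyp2F1 (a b c x : ℝ) : ℝ :=
  Real.Gamma c / (Real.Gamma b * Real.Gamma (c - b)) *
    ∫ t in (0:ℝ)..1, t ^ (b - 1) * (1 - t) ^ (c - b - 1) * (1 - x * t) ^ (-a)

/-- `∫_1^∞ 1/(1 + s⁻¹ t^{α/2}) dt = (2s/(α-2)) ₂F₁(1, 1-2/α, 2-2/α, -s)`. -/
theorem integral_eq_hyp2F1 (α s : ℝ) (hα : 2 < α) (hs : 0 < s) :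
    ∫ t in Set.Ioi (1:ℝ), 1 / (1 + s⁻¹ * t ^ (α / 2)) =
      2 * s / (α - 2) * hyp2F1 1 (1 - 2 / α) (2 - 2 / α) (-s) := by
  have hα0 : (0:ℝ) < α := by linarith
  have hα0' : α ≠ 0 := hα0.ne'
  set p : ℝ := -2 / α with hp
  have hpneg : p < 0 := by
    rw [hp]; exact div_neg_of_neg_of_pos (by norm_num) hα0
  have hpne : p ≠ 0 := hpneg.ne
  set I : ℝ := ∫ t in (0:ℝ)..1, t ^ p * (1 + s * t)⁻¹ with hI
  -- Change of variables u ↦ u ^ p from (0,1) to (1,∞)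
  have himg : (fun u : ℝ => u ^ p) '' Set.Ioo 0 1 = Set.Ioi 1 := by
    ext y
    simp only [Set.mem_image, Set.mem_Ioo, Set.mem_Ioi]
    constructor
    · rintro ⟨x, ⟨hx0, hx1⟩, rfl⟩
      exact one_lt_rpow_iff_of_pos hx0 |>.2 (Or.inr ⟨hx1, hpneg⟩)
    · intro hy
      have hy0 : (0:ℝ) < y := lt_trans one_pos hy
      refine ⟨y ^ p⁻¹, ⟨rpow_pos_of_pos hy0 _, ?_⟩, rpow_inv_rpow hy0.le hpne⟩
      exact rpow_lt_one_of_one_lt_of_neg hy (inv_neg''.2 hpneg)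
  have hderiv : ∀ u ∈ Set.Ioo (0:ℝ) 1,
      HasDerivWithinAt (fun u : ℝ => u ^ p) (p * u ^ (p - 1)) (Set.Ioo 0 1) u := by
    intro u hu
    exact (Real.hasDerivAt_rpow_const (Or.inl hu.1.ne')).hasDerivWithinAt
  have hinj : Set.InjOn (fun u : ℝ => u ^ p) (Set.Ioo 0 1) := by
    intro x hx y hy h
    have := congrArg (fun z : ℝ => z ^ p⁻¹) h
    simpa [rpow_rpow_inv hx.1.le hpne, rpow_rpow_inv hy.1.le hpne] using this
  have hcov := integral_image_eq_integral_abs_deriv_smul (measurableSet_Ioo)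
      hderiv hinj (fun t => 1 / (1 + s⁻¹ * t ^ (α / 2)))
  rw [himg] at hcov
  -- simplify the transformed integrand
  have hLHS : (∫ t in Set.Ioi (1:ℝ), 1 / (1 + s⁻¹ * t ^ (α / 2)))
      = 2 * s / α * I := by
    rw [hcov]
    have : ∀ u ∈ Set.Ioo (0:ℝ) 1,
        |p * u ^ (p - 1)| • (1 / (1 + s⁻¹ * (u ^ p) ^ (α / 2)))
        = 2 * s / α * (u ^ p * (1 + s * u)⁻¹) := by
      intro u hu
      have hu0 : 0 < u := hu.1
      have hupow : (u ^ p) ^ (α / 2) = u⁻¹ := by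
        rw [← Real.rpow_mul hu0.le, hp,
          show -2 / α * (α / 2) = -1 by field_simp, rpow_neg_one]
      have habs : |p * u ^ (p - 1)| = (2 / α) * u ^ (p - 1) := by
        rw [abs_mul, abs_of_neg hpneg, abs_of_pos (rpow_pos_of_pos hu0 _), hp]
        ring_nf
      have hden : 1 + s⁻¹ * u⁻¹ = (s * u + 1) / (s * u) := by
        field_simp
      have hsu : (0:ℝ) < s * u := mul_pos hs hu0
      have hsu1 : (0:ℝ) < s * u + 1 := by linarith
      rw [hupow, habs, hden, smul_eq_mul]
      rw [one_div, inv_div]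
      have hup : u ^ (p - 1) * u = u ^ p := by
        rw [Real.rpow_sub hu0, rpow_one]
        field_simp
      field_simp
      rw [← hup]
      ring
    rw [setIntegral_congr_fun measurableSet_Ioo this, integral_const_mul, hI,
      intervalIntegral.integral_of_le (by norm_num : (0:ℝ) ≤ 1),
      ← integral_Ioc_eq_integral_Ioo]
  -- simplify the hypergeometric side
  have hb : (0:ℝ) < 1 - 2 / α := by
    have : 2 / α < 1 := (div_lt_one hα0).2 hα
    linarith
  have hRHS : hyp2F1 1 (1 - 2 / α) (2 - 2 / α) (-s) = (1 - 2 / α) * I := by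
    unfold hyp2F1
    have hc : (2:ℝ) - 2 / α = (1 - 2 / α) + 1 := by ring
    have hcb : (2:ℝ) - 2 / α - (1 - 2 / α) = 1 := by ring
    rw [hcb, Real.Gamma_one, hc, Real.Gamma_add_one hb.ne']
    have hg : Real.Gamma (1 - 2 / α) ≠ 0 :=
      (Real.Gamma_pos_of_pos hb).ne'
    have hint : (∫ t in (0:ℝ)..1,
        t ^ (1 - 2 / α - 1) * (1 - t) ^ ((1:ℝ) - 1) * (1 - -s * t) ^ (-(1:ℝ)))
        = I := by
      rw [hI]
      apply intervalIntegral.integral_congr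
      intro t _
      have h2 : (1:ℝ) - 2 / α - 1 = p := by rw [hp]; ring
      beta_reduce
      rw [show ((1:ℝ) - 1) = 0 by norm_num, h2, rpow_zero, mul_one,
        show (1:ℝ) - -s * t = 1 + s * t by ring, rpow_neg_one]
    rw [hint, mul_one, mul_div_assoc, div_self hg, mul_one]
  rw [hLHS, hRHS]
  have : 2 * s / (α - 2) * ((1 - 2 / α) * I) = 2 * s / α * I := by
    have hα2 : α - 2 ≠ 0 := by linarith
    field_simp
  rw [this]
end
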